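/- The following are equivalent: (i) δ_k = 0 for all k = 1,…,r (equivalently min(l_k, d_k) = 1 for all k); (ii) there exist a degree vector m ∈ ℤ^r and distinct p_0, p_1 ∈ {0,…,n+1} such that for every p ∈ {0,…,n+1} with p ∉ {p_0, p_1} there exists k with p ∈ P_k(m), while for i = 0, 1, setting A_i = {k : m_k − p_i·d_k ≤ −l_k − 1}, the (p_i, A_i)-summand of m is nonzero and p_0 − Σ_{k∈A_0} l_k = 0 and p_1 − Σ_{k∈A_1} l_k = 1. (That is, a determinantal degree vector m exists whose Weyman complex is reduced to exactly one nonzero cohomology group on each of K_0(m) and K_1(m) if and only if all defects vanish.) -/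

import Mathlib

open Finset

lemma ceil_div_nonneg (l d : ℕ) : 0 ≤ ⌈(l:ℚ)/(d:ℚ)⌉ :=
  Int.ceil_nonneg (by positivity)

lemma ceil_div_le (l d : ℕ) (hd : 0 < d) : ⌈(l:ℚ)/(d:ℚ)⌉ ≤ (l:ℤ) := by
  rw [Int.ceil_le]; push_cast
  exact div_le_self (by positivity) (by exact_mod_cast hd)

lemma key_ineq (l d : ℕ) (hl : 0 < l) (hd : 0 < d)
    (h : ⌈(l:ℚ)/(d:ℚ)⌉ = (l:ℤ)) : ((l:ℤ) - 1) * d < l := by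
  by_contra hc
  push_neg at hc
  have hq : (l:ℚ)/(d:ℚ) ≤ (((l:ℤ) - 1 : ℤ) : ℚ) := by
    rw [div_le_iff₀ (by exact_mod_cast hd)]
    exact_mod_cast hc
  have := Int.ceil_le.mpr hq
  omega



/-- `n = l₁ + ⋯ + l_r`, as an integer. -/
def nDim {r : ℕ} (l : Fin r → ℕ) : ℤ := ∑ k, (l k : ℤ)

/-- The defect vector: `δ_k = l_k − ⌈l_k / d_k⌉`. -/
def defect {r : ℕ} (l d : Fin r → ℕ) (k : Fin r) : ℤ :=
  (l k : ℤ) - ⌈(l k : ℚ) / (d k : ℚ)⌉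

/-- `P_k(m) = {p ∈ ℤ : m_k/d_k < p ≤ (m_k + l_k)/d_k}`. -/
def Pset {r : ℕ} (l d : Fin r → ℕ) (m : Fin r → ℤ) (k : Fin r) : Set ℤ :=
  {p : ℤ | (m k : ℚ) / (d k : ℚ) < (p : ℚ) ∧
    (p : ℚ) ≤ ((m k : ℚ) + (l k : ℚ)) / (d k : ℚ)}

/-- The `(p,J)`-summand of `m` is nonzero: `m_k − p d_k ≤ −l_k − 1` for `k ∈ J`
and `m_k − p d_k ≥ 0` for `k ∉ J`. -/
def SummandNonzero {r : ℕ} (l d : Fin r → ℕ) (m : Fin r → ℤ) (p : ℤ)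
    (J : Finset (Fin r)) : Prop :=
  (∀ k ∈ J, m k - p * d k ≤ -(l k : ℤ) - 1) ∧ ∀ k ∉ J, 0 ≤ m k - p * d k

/-- `K_ν(m) = 0`: every `(p,J)`-summand with `p ∈ {0,…,n+1}` and
`p − Σ_{k∈J} l_k = ν` is zero. -/
def Kvanish {r : ℕ} (l d : Fin r → ℕ) (m : Fin r → ℤ) (ν : ℤ) : Prop :=
  ∀ p : ℤ, 0 ≤ p → p ≤ nDim l + 1 →
    ∀ J : Finset (Fin r), p - ∑ k ∈ J, (l k : ℤ) = ν → ¬ SummandNonzero l d m p J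

/-- `m` is determinantal iff `K_{-1}(m) = 0` and `K_2(m) = 0`. -/
def Determinantal {r : ℕ} (l d : Fin r → ℕ) (m : Fin r → ℤ) : Prop :=
  Kvanish l d m (-1) ∧ Kvanish l d m 2

open scoped Classical in
/-- The dimension of the `(p,J)`-summand of `m`. -/
noncomputable def dimSummand {r : ℕ} (l d : Fin r → ℕ) (m : Fin r → ℤ) (p : ℤ)
    (J : Finset (Fin r)) : ℕ :=
  if SummandNonzero l d m p J then
    (∏ k ∈ J, (p * d k - m k - 1).toNat.choose (l k)) *
      ∏ k ∈ Jᶜ, (m k - p * d k + l k).toNat.choose (l k)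
  else 0

open scoped Classical in
/-- `dim K_ν(m)`. -/
noncomputable def dimK {r : ℕ} (l d : Fin r → ℕ) (m : Fin r → ℤ) (ν : ℤ) : ℕ :=
  ∑ p ∈ Finset.range ((∑ k, l k) + 2),
    ((∑ k, l k) + 1).choose p *
      ∑ J ∈ Finset.univ.filter
          (fun J : Finset (Fin r) => (p : ℤ) - ∑ k ∈ J, (l k : ℤ) = ν),
        dimSummand l d m (p : ℤ) J

/-- `m′`: agrees with `m` except `m′_k = m_k + d_k − [m_k]_k − 1`. -/
def mprime {r : ℕ} (d : Fin r → ℕ) (m : Fin r → ℤ) (k : Fin r) : Fin r → ℤ :=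
  Function.update m k (m k + d k - m k % (d k : ℤ) - 1)

/-- `m″`: agrees with `m` except `m″_k = m_k − [m_k + l_k]_k`. -/
def msecond {r : ℕ} (l d : Fin r → ℕ) (m : Fin r → ℤ) (k : Fin r) : Fin r → ℤ :=
  Function.update m k (m k - (m k + l k) % (d k : ℤ))

/-- The critical degree vector `ρ_k = (n+1) d_k − l_k − 1`. -/
def critical {r : ℕ} (l d : Fin r → ℕ) (k : Fin r) : ℤ :=
  (nDim l + 1) * d k - l k - 1

/-- `m` yields a pure Sylvester-type matrix. -/
def PureSylvester {r : ℕ} (l d : Fin r → ℕ) (m : Fin r → ℤ) : Prop :=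
  (∀ k, 0 ≤ m k) ∧ (∀ k, (d k : ℤ) ≤ m k) ∧ Kvanish l d m (-1) ∧
  ∀ ν : ℤ, (ν = 0 ∨ ν = 1) →
    ∀ p : ℤ, 0 ≤ p → p ≤ nDim l + 1 → ∀ J : Finset (Fin r), J ≠ ∅ →
      p - ∑ k ∈ J, (l k : ℤ) = ν → ¬ SummandNonzero l d m p J

/-- `m` yields a pure Bézout-type complex. -/
def PureBezout {r : ℕ} (l d : Fin r → ℕ) (m : Fin r → ℤ) : Prop :=
  Kvanish l d m (-1) ∧
  SummandNonzero l d m 0 ∅ ∧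
  (∀ p : ℤ, 0 ≤ p → p ≤ nDim l + 1 → ∀ J : Finset (Fin r), J ≠ ∅ →
      p - ∑ k ∈ J, (l k : ℤ) = 0 → ¬ SummandNonzero l d m p J) ∧
  SummandNonzero l d m (nDim l + 1) Finset.univ ∧
  (∀ p : ℤ, 0 ≤ p → p ≤ nDim l + 1 → ∀ J : Finset (Fin r),
      ¬(p = nDim l + 1 ∧ J = Finset.univ) →
      p - ∑ k ∈ J, (l k : ℤ) = 1 → ¬ SummandNonzero l d m p J)

/-- The Sylvester degree vector `m^π_k = (1 + Σ_{π(j) ≥ π(k)} l_j) d_k − l_k`. -/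
def mSyl {r : ℕ} (l d : Fin r → ℕ) (π : Equiv.Perm (Fin r)) (k : Fin r) : ℤ :=
  (1 + ∑ j ∈ Finset.univ.filter (fun j => π k ≤ π j), (l j : ℤ)) * d k - l k

/-- The Bézout degree vector `m^π_k = −l_k + d_k Σ_{π(j) ≥ π(k)} l_j`. -/
def mBez {r : ℕ} (l d : Fin r → ℕ) (π : Equiv.Perm (Fin r)) (k : Fin r) : ℤ :=
  -(l k : ℤ) + (d k : ℤ) * ∑ j ∈ Finset.univ.filter (fun j => π k ≤ π j), (l j : ℤ)

/-- All defects vanish iff there exists a determinantal degree vector `m` whose Weyman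
complex is reduced to exactly one nonzero cohomology group on each of `K_0(m)` and
`K_1(m)`. -/
theorem two_terms_iff_defects_vanish (r : ℕ) (hr : 0 < r) (l d : Fin r → ℕ) (hl : ∀ k, 0 < l k) (hd : ∀ k, 0 < d k) :
    (∀ k, defect l d k = 0) ↔
      ∃ (m : Fin r → ℤ) (p₀ p₁ : ℤ), p₀ ≠ p₁ ∧
        0 ≤ p₀ ∧ p₀ ≤ nDim l + 1 ∧ 0 ≤ p₁ ∧ p₁ ≤ nDim l + 1 ∧
        (∀ p : ℤ, 0 ≤ p → p ≤ nDim l + 1 → p ≠ p₀ → p ≠ p₁ →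
          ∃ k, p ∈ Pset l d m k) ∧
        SummandNonzero l d m p₀
          (Finset.univ.filter fun k => m k - p₀ * d k ≤ -(l k : ℤ) - 1) ∧
        SummandNonzero l d m p₁
          (Finset.univ.filter fun k => m k - p₁ * d k ≤ -(l k : ℤ) - 1) ∧
        p₀ - ∑ k ∈ (Finset.univ.filter fun k => m k - p₀ * d k ≤ -(l k : ℤ) - 1),
          (l k : ℤ) = 0 ∧
        p₁ - ∑ k ∈ (Finset.univ.filter fun k => m k - p₁ * d k ≤ -(l k : ℤ) - 1),
          (l k : ℤ) = 1 := by
  constructor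
  · -- forward direction: construct the Sylvester-type vector
    intro hδ
    have hceil : ∀ k, ⌈(l k:ℚ)/(d k:ℚ)⌉ = (l k : ℤ) := by
      intro k; have := hδ k; unfold defect at this; omega
    set S : ℕ → ℤ :=
      fun i => ∑ j ∈ Finset.univ.filter (fun j : Fin r => i ≤ (j:ℕ)), (l j : ℤ) with hS
    have hSr : S r = 0 := by
      have he : Finset.univ.filter (fun j : Fin r => r ≤ (j:ℕ)) = ∅ := by
        ext j; simp only [Finset.mem_filter, Finset.mem_univ, true_and,
          Finset.notMem_empty, iff_false, not_le]
        exact j.isLt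
      rw [hS]; simp only [he, Finset.sum_empty]
    have hS0 : S 0 = nDim l := by
      rw [hS, nDim]
      congr 1
      simp
    have hstep : ∀ k : Fin r, S (k:ℕ) = S ((k:ℕ)+1) + (l k : ℤ) := by
      intro k
      have hins : Finset.univ.filter (fun j : Fin r => (k:ℕ) ≤ (j:ℕ)) =
          insert k (Finset.univ.filter (fun j : Fin r => (k:ℕ)+1 ≤ (j:ℕ))) := by
        ext j
        simp only [Finset.mem_filter, Finset.mem_univ, true_and, Finset.mem_insert,
          Fin.ext_iff]
        omega
      have hnm : k ∉ Finset.univ.filter (fun j : Fin r => (k:ℕ)+1 ≤ (j:ℕ)) := by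
        simp
      rw [hS]
      simp only [hins, Finset.sum_insert hnm]
      ring
    have hSnn : ∀ i, 0 ≤ S i := by
      intro i; rw [hS]
      exact Finset.sum_nonneg (fun j _ => by positivity)
    have hSl : ∀ k : Fin r, (l k:ℤ) ≤ S (k:ℕ) := by
      intro k; have := hstep k; have := hSnn ((k:ℕ)+1); omega
    set m : Fin r → ℤ := fun k => (1 + S (k:ℕ)) * d k - l k with hm
    have hmval : ∀ k, m k = (1 + S (k:ℕ)) * d k - l k := fun k => rfl
    have hdk1 : ∀ k, (1:ℤ) ≤ d k := by intro k; exact_mod_cast hd k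
    have hm1 : ∀ k, (d k:ℤ) ≤ m k := by
      intro k
      rw [hmval k]
      have h1 := hSl k
      have h2 := hSnn (k:ℕ)
      have h3 := hdk1 k
      nlinarith
    have hmnn : ∀ k, 0 ≤ m k := by
      intro k; have := hm1 k; have := hdk1 k; omega
    have hJ0 : (Finset.univ.filter fun k => m k - (0:ℤ) * d k ≤ -(l k : ℤ) - 1) = ∅ := by
      ext k
      simp only [Finset.mem_filter, Finset.mem_univ, true_and, Finset.notMem_empty,
        iff_false, not_le, zero_mul, sub_zero]
      have := hmnn k
      have : (0:ℤ) < l k := by exact_mod_cast hl k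
      omega
    have hJ1 : (Finset.univ.filter fun k => m k - (1:ℤ) * d k ≤ -(l k : ℤ) - 1) = ∅ := by
      ext k
      simp only [Finset.mem_filter, Finset.mem_univ, true_and, Finset.notMem_empty,
        iff_false, not_le, one_mul]
      have := hm1 k
      have : (0:ℤ) < l k := by exact_mod_cast hl k
      omega
    have hn0 : 0 ≤ nDim l := by rw [← hS0]; exact hSnn 0
    refine ⟨m, 0, 1, by norm_num, le_refl 0, by omega, by norm_num, by omega,
      ?_, ?_, ?_, ?_, ?_⟩
    · -- coverage
      intro p hp0 hpn hne0 hne1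
      have hp2 : 1 < p := by omega
      have key : ∀ c i, i + c = r → ∀ q : ℤ, 1 < q → q ≤ S i + 1 →
          ∃ j : Fin r, i ≤ (j:ℕ) ∧ S ((j:ℕ)+1) + 1 < q ∧ q ≤ S (j:ℕ) + 1 := by
        intro c
        induction c with
        | zero =>
          intro i hi q hq1 hq2
          rw [Nat.add_zero] at hi
          subst hi
          rw [hSr] at hq2
          omega
        | succ c ih =>
          intro i hi q hq1 hq2
          have hir : i < r := by omega
          by_cases hcase : S (i+1) + 1 < q
          · exact ⟨⟨i, hir⟩, le_refl _, hcase, hq2⟩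
          · obtain ⟨j, hj1, hj2, hj3⟩ := ih (i+1) (by omega) q hq1 (by omega)
            exact ⟨j, by omega, hj2, hj3⟩
      obtain ⟨j, _, hj2, hj3⟩ := key r 0 (by omega) p hp2 (by rw [hS0]; exact hpn)
      refine ⟨j, ?_, ?_⟩
      · -- lower bound
        have hdq : (0:ℚ) < d j := by exact_mod_cast hd j
        rw [div_lt_iff₀ hdq]
        have ht : 1 + S (j:ℕ) - p ≤ (l j:ℤ) - 1 := by
          have := hstep j; omega
        have h1 : (1 + S (j:ℕ) - p) * d j ≤ ((l j:ℤ) - 1) * d j :=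
          mul_le_mul_of_nonneg_right ht (by positivity)
        have h2 := key_ineq (l j) (d j) (hl j) (hd j) (hceil j)
        have hlt : m j < p * d j := by
          rw [hmval j]
          nlinarith
        exact_mod_cast hlt
      · -- upper bound
        have hdq : (0:ℚ) < d j := by exact_mod_cast hd j
        rw [le_div_iff₀ hdq]
        have hle : p * d j ≤ m j + l j := by
          rw [hmval j]
          have h3 : p ≤ 1 + S (j:ℕ) := by omega
          have := hdk1 j
          nlinarith
        exact_mod_cast hle
    · rw [hJ0]
      exact ⟨fun k hk => absurd hk (Finset.notMem_empty k),
        fun k _ => by simpa using hmnn k⟩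
    · rw [hJ1]
      exact ⟨fun k hk => absurd hk (Finset.notMem_empty k),
        fun k _ => by simpa using hm1 k⟩
    · rw [hJ0, Finset.sum_empty]; norm_num
    · rw [hJ1, Finset.sum_empty]; norm_num
  · -- reverse direction: counting
    rintro ⟨m, p₀, p₁, hne, h00, h01, h10, h11, hcov, hs0, hs1, hv0, hv1⟩
    set N : ℕ := ∑ k, l k with hNdef
    have hN : nDim l = (N:ℤ) := by rw [nDim, hNdef]; push_cast; rfl
    rw [hN] at h01 h11
    set a : Fin r → ℤ := fun k => ⌊(m k:ℚ)/(d k:ℚ)⌋ with ha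
    set b : Fin r → ℤ := fun k => ⌊((m k:ℚ) + (l k:ℚ))/(d k:ℚ)⌋ with hb
    have hP : ∀ (k : Fin r) (p : ℤ), p ∈ Pset l d m k ↔ p ∈ Finset.Ioc (a k) (b k) := by
      intro k p
      rw [Finset.mem_Ioc]
      simp only [Pset, Set.mem_setOf_eq, ha, hb]
      constructor
      · rintro ⟨h1, h2⟩
        exact ⟨Int.floor_lt.mpr h1, Int.le_floor.mpr h2⟩
      · rintro ⟨h1, h2⟩
        exact ⟨Int.floor_lt.mp h1, Int.le_floor.mp h2⟩
    have hnot : ∀ (p : ℤ),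
        SummandNonzero l d m p
          (Finset.univ.filter fun k => m k - p * d k ≤ -(l k : ℤ) - 1) →
        ∀ k, p ∉ Finset.Ioc (a k) (b k) := by
      intro p hs k hmem
      rw [Finset.mem_Ioc] at hmem
      have hdq : (0:ℚ) < d k := by exact_mod_cast hd k
      by_cases hk : m k - p * d k ≤ -(l k : ℤ) - 1
      · have h1 : (p:ℚ) ≤ ((m k:ℚ) + l k)/(d k:ℚ) := Int.le_floor.mp hmem.2
        rw [le_div_iff₀ hdq] at h1
        have h2 : p * d k ≤ m k + l k := by exact_mod_cast h1
        linarith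
      · have hk' : 0 ≤ m k - p * d k := hs.2 k (by simp only [Finset.mem_filter, Finset.mem_univ, true_and]; exact hk)
        have h1 : (m k:ℚ)/(d k:ℚ) < p := Int.floor_lt.mp hmem.1
        rw [div_lt_iff₀ hdq] at h1
        have h2 : m k < p * d k := by exact_mod_cast h1
        linarith
    set T : Finset ℤ := Finset.Icc (0:ℤ) ((N:ℤ)+1) \ {p₀, p₁} with hT
    have hsub : T ⊆ Finset.univ.biUnion (fun k => Finset.Ioc (a k) (b k)) := by
      intro p hp
      rw [hT, Finset.mem_sdiff, Finset.mem_Icc] at hp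
      obtain ⟨⟨hp0, hp1⟩, hp2⟩ := hp
      rw [Finset.mem_insert, Finset.mem_singleton] at hp2
      push_neg at hp2
      obtain ⟨k, hk⟩ := hcov p hp0 (by omega) hp2.1 hp2.2
      rw [Finset.mem_biUnion]
      exact ⟨k, Finset.mem_univ k, (hP k p).mp hk⟩
    have hpair : ({p₀, p₁} : Finset ℤ) ⊆ Finset.Icc (0:ℤ) ((N:ℤ)+1) := by
      intro x hx
      rw [Finset.mem_insert, Finset.mem_singleton] at hx
      rw [Finset.mem_Icc]
      rcases hx with h | h <;> subst h <;> omega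
    have hcard2 : ({p₀, p₁} : Finset ℤ).card = 2 := by
      rw [Finset.card_insert_of_notMem (by simpa using hne), Finset.card_singleton]
    have hcardIcc : (Finset.Icc (0:ℤ) ((N:ℤ)+1)).card = N + 2 := by
      rw [Int.card_Icc]; omega
    have hcardT : T.card = N := by
      rw [hT, Finset.card_sdiff_of_subset hpair, hcard2, hcardIcc]
      omega
    have h1 : T.card ≤ ∑ k, (Finset.Ioc (a k) (b k)).card :=
      le_trans (Finset.card_le_card hsub) (Finset.card_biUnion_le)
    have hble : ∀ k, (Finset.Ioc (a k) (b k)).card ≤ (⌈(l k:ℚ)/(d k:ℚ)⌉).toNat := by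
      intro k
      rw [Int.card_Ioc]
      have hbk : b k ≤ a k + ⌈(l k:ℚ)/(d k:ℚ)⌉ := by
        have h2 : ((m k:ℚ) + l k)/(d k:ℚ) ≤
            (m k:ℚ)/(d k:ℚ) + ((⌈(l k:ℚ)/(d k:ℚ)⌉ : ℤ) : ℚ) := by
          rw [add_div]
          exact add_le_add (le_refl _) (Int.le_ceil _)
        calc b k ≤ ⌊(m k:ℚ)/(d k:ℚ) + ((⌈(l k:ℚ)/(d k:ℚ)⌉ : ℤ) : ℚ)⌋ :=
              Int.floor_le_floor h2
          _ = a k + ⌈(l k:ℚ)/(d k:ℚ)⌉ := Int.floor_add_intCast _ _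
      omega
    have h2 : ∑ k, (Finset.Ioc (a k) (b k)).card ≤
        ∑ k, (⌈(l k:ℚ)/(d k:ℚ)⌉).toNat :=
      Finset.sum_le_sum (fun k _ => hble k)
    have h3 : ∀ k : Fin r, (⌈(l k:ℚ)/(d k:ℚ)⌉).toNat ≤ l k := by
      intro k
      have := ceil_div_le (l k) (d k) (hd k)
      omega
    have h4 : ∑ k, (⌈(l k:ℚ)/(d k:ℚ)⌉).toNat = N := by
      have hle : ∑ k, (⌈(l k:ℚ)/(d k:ℚ)⌉).toNat ≤ ∑ k, l k :=
        Finset.sum_le_sum (fun k _ => h3 k)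
      omega
    have h5 : ∀ k : Fin r, (⌈(l k:ℚ)/(d k:ℚ)⌉).toNat = l k := by
      have := (Finset.sum_eq_sum_iff_of_le (fun k _ => h3 k)).mp (by rw [h4, hNdef])
      intro k
      exact this k (Finset.mem_univ k)
    intro k
    have h6 := h5 k
    have h7 := ceil_div_nonneg (l k) (d k)
    unfold defect
    omega
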